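/- arXiv:2604.25354 — 2 statements merged into one kernel-verified Lean document; each statement's English description precedes it below -/
import Mathlib

section
/- Let q be a prime power and m ≥ 2. Let g(X) ∈ E[X] be a polynomial of degree r > 1 with no roots in E, where r divides q − 1, and set G(X) = g(X)^{(q^m−1)/(q−1)} (the norm polynomial N_{E/F}(g)). Take the support set L = E (all q^m elements of E, on which G never vanishes). Then the wild Goppa code Γ_q(L, G) has minimum distance exactly d = r·(q^m − 1)/(q − 1) + 1. -/
open Polynomial Finset

/-- The Goppa code `Γ_q(L, G)` with ordered support `α` and Goppa polynomial `G`: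
codewords `c ∈ F^n` such that `G` divides `∑ i, c_i · ∏_{j ≠ i} (X − α_j)` in `E[X]`. -/
def goppaCode (F : Type) {E : Type} [Field F] [Field E] [Algebra F E] {n : ℕ}
    (α : Fin n → E) (G : Polynomial E) : Set (Fin n → F) :=
  {c | G ∣ ∑ i : Fin n, Polynomial.C (algebraMap F E (c i)) *
      ∏ j ∈ Finset.univ.erase i, (Polynomial.X - Polynomial.C (α j))}

/-- A (nonzero, linear) code `Γ ⊆ F^n` has minimum distance `d`:
there is a nonzero codeword of Hamming weight `d`, and every nonzero codeword
has Hamming weight at least `d`. -/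
def hasMinDist {F : Type} [Zero F] [DecidableEq F] {n : ℕ}
    (Γ : Set (Fin n → F)) (d : ℕ) : Prop :=
  (∃ c ∈ Γ, c ≠ 0 ∧ hammingNorm c = d) ∧ ∀ c ∈ Γ, c ≠ 0 → d ≤ hammingNorm c

section Helpers

variable {F E : Type} [Field F] [Field E] [Algebra F E] [DecidableEq E] [Fintype E]

omit [Fintype E] in
lemma eval_node (S : Finset E) (v : E → E) {x₀ : E} (hx₀ : x₀ ∈ S) :
    eval x₀ (∑ x ∈ S, C (v x) * ∏ y ∈ S.erase x, (X - C y)) =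
      v x₀ * ∏ y ∈ S.erase x₀, (x₀ - y) := by
  rw [eval_finset_sum, Finset.sum_eq_single x₀]
  · simp [eval_prod]
  · intro x hx hne
    have hx₀' : x₀ ∈ S.erase x := Finset.mem_erase.mpr ⟨hne.symm, hx₀⟩
    rw [eval_mul, eval_prod, Finset.prod_eq_zero hx₀' (by simp), mul_zero]
  · intro h; exact absurd hx₀ h

omit [Fintype E] in
lemma natDeg_node (S : Finset E) (v : E → E) :
    (∑ x ∈ S, C (v x) * ∏ y ∈ S.erase x, (X - C y)).natDegree ≤ S.card - 1 := by
  refine natDegree_sum_le_of_forall_le _ _ ?_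
  intro x hx
  refine (natDegree_C_mul_le _ _).trans ?_
  rw [natDegree_prod _ _ (fun y _ => X_sub_C_ne_zero y)]
  simp [Finset.card_erase_of_mem hx]

lemma goppa_sum_eq {n : ℕ} (α : Fin n → E) (hα : Function.Bijective α) (c : Fin n → F)
    (S : Finset E) (hsupp : ∀ i, α i ∉ S → c i = 0) :
    ∑ i : Fin n, C (algebraMap F E (c i)) * ∏ j ∈ Finset.univ.erase i, (X - C (α j)) =
      (∏ y ∈ Finset.univ \ S, (X - C y)) *
        ∑ x ∈ S, C (algebraMap F E (c ((Equiv.ofBijective α hα).symm x))) *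
          ∏ y ∈ S.erase x, (X - C y) := by
  classical
  set β := Equiv.ofBijective α hα with hβ
  have hβa : ∀ i, β i = α i := fun i => rfl
  -- reindex each product
  have h1 : ∀ i : Fin n, ∏ j ∈ Finset.univ.erase i, (X - C (α j))
      = ∏ y ∈ Finset.univ.erase (α i), ((X : E[X]) - C y) := by
    intro i
    have himg : (Finset.univ.erase i).image α = Finset.univ.erase (α i) := by
      rw [Finset.image_erase hα.injective, Finset.image_univ_of_surjective hα.surjective]
    rw [← himg, Finset.prod_image (fun x _ y _ h => hα.injective h)]
  -- reindex the sum
  have h2 : ∑ i : Fin n, C (algebraMap F E (c i)) * ∏ j ∈ Finset.univ.erase i, (X - C (α j))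
      = ∑ x : E, C (algebraMap F E (c (β.symm x))) * ∏ y ∈ Finset.univ.erase x, (X - C y) := by
    rw [← Equiv.sum_comp β
      (fun x => C (algebraMap F E (c (β.symm x))) * ∏ y ∈ Finset.univ.erase x, ((X:E[X]) - C y))]
    refine Finset.sum_congr rfl ?_
    intro i _
    rw [h1 i, Equiv.symm_apply_apply, hβa]
  rw [h2]
  -- restrict to S
  rw [← Finset.sum_subset (Finset.subset_univ S) (by
    intro x _ hxS
    have : c (β.symm x) = 0 := by
      apply hsupp
      rwa [← hβa, Equiv.apply_symm_apply]
    rw [this, map_zero, map_zero, zero_mul])]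
  -- split the products
  rw [Finset.mul_sum]
  refine Finset.sum_congr rfl ?_
  intro x hxS
  have hsub : S.erase x ⊆ Finset.univ.erase x := fun y hy =>
    Finset.mem_erase.mpr ⟨(Finset.mem_erase.mp hy).1, Finset.mem_univ y⟩
  have hsd : (Finset.univ.erase x) \ (S.erase x) = Finset.univ \ S := by
    ext y
    simp only [Finset.mem_sdiff, Finset.mem_erase, Finset.mem_univ, true_and, and_true]
    constructor
    · rintro ⟨hyx, hy⟩ hyS
      exact hy ⟨hyx, hyS⟩
    · intro hyS
      refine ⟨fun h => hyS (h ▸ hxS), fun h => hyS h.2⟩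
  rw [← Finset.prod_sdiff hsub, hsd]
  ring

-- weight of a codeword as the cardinality of its E-indexed support
lemma hammingNorm_eq_card {n : ℕ} [DecidableEq F] (α : Fin n → E) (hα : Function.Bijective α)
    (c : Fin n → F) :
    hammingNorm c
      = (Finset.univ.filter (fun x : E => c ((Equiv.ofBijective α hα).symm x) ≠ 0)).card := by
  classical
  set β := Equiv.ofBijective α hα with hβ
  refine Finset.card_bij (fun i _ => α i) ?_ ?_ ?_
  · intro i hi
    simp only [Finset.mem_filter, Finset.mem_univ, true_and]
    have : β.symm (α i) = i := β.symm_apply_apply i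
    rw [this]
    simpa [hammingNorm] using hi
  · intro i _ j _ h
    exact hα.injective h
  · intro x hx
    refine ⟨β.symm x, ?_, ?_⟩
    · simp only [Finset.mem_filter, Finset.mem_univ, true_and] at hx
      simpa [hammingNorm] using hx
    · exact β.apply_symm_apply x

end Helpers


set_option maxHeartbeats 1000000 in
/-- Theorem: tightness of the improved bound for wild Goppa codes.
Let `g ∈ E[X]` have degree `r > 1` with `r ∣ q - 1` and no roots in `E`, and let
`G = g^{(q^m-1)/(q-1)}` be the norm polynomial. With support set `L = E`
(all `q^m` elements), the wild Goppa code `Γ_q(L, G)` has minimum distance exactly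
`r(q^m - 1)/(q - 1) + 1`. -/
theorem wild_goppa_minDist
    (q m r s : ℕ) (hq : IsPrimePow q) (hm : 2 ≤ m)
    (hr : 1 < r) (hrq : r ∣ q - 1) (hs : s * (q - 1) = q ^ m - 1)
    (F E : Type) [Field F] [Fintype F] [DecidableEq F] [Field E] [Fintype E] [Algebra F E]
    (hF : Fintype.card F = q) (hE : Fintype.card E = q ^ m)
    (g : Polynomial E) (hgdeg : g.natDegree = r) (hg0 : g ≠ 0)
    (hnoroot : ∀ x : E, g.eval x ≠ 0)
    (α : Fin (q ^ m) → E) (hα : Function.Bijective α) :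
    hasMinDist (goppaCode F α (g ^ s)) (r * s + 1) := by
  classical
  have hq2 : 2 ≤ q := hq.two_le
  have hqm2 : 2 ≤ q ^ m := by
    calc 2 ≤ q := hq2
    _ = q ^ 1 := (pow_one q).symm
    _ ≤ q ^ m := Nat.pow_le_pow_right (by omega) (by omega)
  have hs1 : 1 ≤ s := by
    rcases Nat.eq_zero_or_pos s with h | h
    · subst h; simp at hs; omega
    · exact h
  have hq3 : 3 ≤ q := by
    have := Nat.le_of_dvd (by omega) hrq
    omega
  set K := r * s with hKdef
  have hKdvd : K ∣ q ^ m - 1 := by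
    obtain ⟨t, ht⟩ := hrq
    exact ⟨t, by rw [← hs, ht]; ring⟩
  have hK2 : 2 ≤ K := by
    calc 2 = 2 * 1 := rfl
    _ ≤ r * s := Nat.mul_le_mul hr hs1
  have hK0 : 0 < K := by omega
  -- characteristic
  set p := ringChar E with hpdef
  have hpcard : ((Fintype.card E : ℕ) : E) = 0 := FiniteField.cast_card_eq_zero E
  have hpdvd : p ∣ q ^ m := by
    rw [← hE]
    exact (CharP.cast_eq_zero_iff E p _).mp hpcard
  have hKE : ((K : ℕ) : E) ≠ 0 := by
    intro h0
    have h1 : p ∣ K := (CharP.cast_eq_zero_iff E p K).mp h0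
    have h2 : p ∣ q ^ m - 1 := h1.trans hKdvd
    have h3 : p ∣ 1 := by
      have := Nat.dvd_sub hpdvd h2
      rwa [show q ^ m - (q ^ m - 1) = 1 by omega] at this
    have h4 : p ≠ 1 := CharP.char_ne_one E p
    exact h4 (Nat.dvd_one.mp h3)
  -- primitive root
  obtain ⟨u, hu⟩ := IsCyclic.exists_generator (α := Eˣ)
  have hord : orderOf u = q ^ m - 1 := by
    rw [orderOf_eq_card_of_forall_mem_zpowers hu, Nat.card_eq_fintype_card,
      Fintype.card_units, hE]
  have hN0 : 0 < q ^ m - 1 := by omega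
  have hNKne : (q ^ m - 1) / K ≠ 0 := (Nat.div_pos (Nat.le_of_dvd hN0 hKdvd) hK0).ne'
  have hordζ : orderOf (u ^ ((q ^ m - 1) / K)) = K := by
    rw [orderOf_pow' u hNKne, hord, Nat.gcd_eq_right (Nat.div_dvd_of_dvd hKdvd),
      Nat.div_div_self hKdvd (by omega)]
  have hζ : IsPrimitiveRoot ((u ^ ((q ^ m - 1) / K) : Eˣ) : E) K := by
    rw [IsPrimitiveRoot.coe_units_iff]
    nth_rewrite 2 [← hordζ]
    exact IsPrimitiveRoot.orderOf (u ^ ((q ^ m - 1) / K))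
  set T := Polynomial.nthRootsFinset K (1 : E) with hTdef
  have hTcard : T.card = K := hζ.card_nthRootsFinset
  have hmemT : ∀ {x : E}, x ∈ T ↔ x ^ K = 1 := fun {x} => Polynomial.mem_nthRootsFinset hK0 (1 : E)
  have h0T : (0 : E) ∉ T := by
    rw [hmemT, zero_pow hK0.ne']
    exact fun h => zero_ne_one h
  set S := insert (0 : E) T with hSdef
  have hScard : S.card = K + 1 := by rw [Finset.card_insert_of_notMem h0T, hTcard]
  have hprod : (X ^ K - 1 : E[X]) = ∏ y ∈ T, (X - C y) :=
    Polynomial.X_pow_sub_one_eq_prod hK0 hζ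
  -- products of differences
  have hD : ∀ x ∈ T, ∏ y ∈ T.erase x, (x - y) = (K : E) * x ^ (K - 1) := by
    intro x hx
    have hnodal : (∏ y ∈ T, ((X : E[X]) - C y)) = Lagrange.nodal T id := by
      rw [Lagrange.nodal_eq]
      rfl
    have h1 : derivative (X ^ K - 1 : E[X]) = ∑ b ∈ T, Lagrange.nodal (T.erase b) id := by
      rw [hprod, hnodal, Lagrange.derivative_nodal]
    have h2 : derivative (X ^ K - 1 : E[X]) = C (K : E) * X ^ (K - 1) := by
      rw [derivative_sub, derivative_one, sub_zero, derivative_X_pow]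
    have h3 : eval x (∑ b ∈ T, Lagrange.nodal (T.erase b) id)
        = ∏ y ∈ T.erase x, (x - y) := by
      rw [eval_finset_sum, Finset.sum_eq_single x]
      · rw [Lagrange.eval_nodal]
        rfl
      · intro b hb hbx
        have hxb : x ∈ T.erase b := Finset.mem_erase.mpr ⟨hbx.symm, hx⟩
        exact Lagrange.eval_nodal_at_node (v := id) (i := x) hxb
      · intro h; exact absurd hx h
    rw [← h3, ← h1, h2]
    simp
  have hd : ∀ x ∈ T, ∏ y ∈ S.erase x, (x - y) = (K : E) := by
    intro x hx
    have hx0 : x ≠ 0 := fun h => h0T (h ▸ hx)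
    have h0e : (0 : E) ∉ T.erase x := fun h => h0T (Finset.mem_of_mem_erase h)
    rw [hSdef, Finset.erase_insert_of_ne (Ne.symm hx0), Finset.prod_insert h0e, hD x hx,
      sub_zero]
    have hxK : x ^ K = 1 := hmemT.mp hx
    calc x * ((K : E) * x ^ (K - 1)) = (K : E) * (x ^ (K - 1) * x) := by ring
    _ = (K : E) * x ^ K := by rw [← pow_succ, Nat.sub_add_cancel hK0]
    _ = (K : E) := by rw [hxK, mul_one]
  have hd0 : ∏ y ∈ S.erase 0, ((0 : E) - y) = -1 := by
    rw [hSdef, Finset.erase_insert h0T]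
    calc ∏ y ∈ T, ((0 : E) - y) = eval 0 (∏ y ∈ T, ((X : E[X]) - C y)) := by
          rw [eval_prod]; refine Finset.prod_congr rfl ?_; intro y _; simp
    _ = eval 0 (X ^ K - 1 : E[X]) := by rw [← hprod]
    _ = -1 := by simp [zero_pow hK0.ne']
  -- the image of F in E
  have hφinj : Function.Injective (algebraMap F E) := (algebraMap F E).injective
  have hrange : ∀ z : E, z ^ q = z → ∃ a : F, algebraMap F E a = z := by
    intro z hz
    set A : Finset E := Finset.univ.image (algebraMap F E) with hA
    set B : Finset E := Finset.univ.filter (fun w : E => w ^ q = w) with hB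
    have hAB : A ⊆ B := by
      intro w hw
      obtain ⟨a, _, rfl⟩ := Finset.mem_image.mp hw
      rw [hB, Finset.mem_filter]
      refine ⟨Finset.mem_univ _, ?_⟩
      rw [← map_pow]
      congr 1
      calc a ^ q = a ^ Fintype.card F := by rw [hF]
      _ = a := FiniteField.pow_card a
    have hAcard : A.card = q := by
      rw [hA, Finset.card_image_of_injective _ hφinj, Finset.card_univ, hF]
    have hBcard : B.card ≤ q := by
      have hmon : (X ^ q - X : E[X]).Monic := by
        refine Polynomial.monic_X_pow_sub ?_
        rw [Polynomial.degree_X]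
        exact_mod_cast Nat.one_lt_cast.mpr (by omega)
      have hne : (X ^ q - X : E[X]) ≠ 0 := hmon.ne_zero
      have hsub : B ⊆ (X ^ q - X : E[X]).roots.toFinset := by
        intro w hw
        rw [hB, Finset.mem_filter] at hw
        rw [Multiset.mem_toFinset, Polynomial.mem_roots hne]
        show Polynomial.eval w _ = 0
        simp [hw.2]
      calc B.card ≤ _ := Finset.card_le_card hsub
      _ ≤ Multiset.card (X ^ q - X : E[X]).roots := Multiset.toFinset_card_le _
      _ ≤ (X ^ q - X : E[X]).natDegree := Polynomial.card_roots' _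
      _ ≤ max (X ^ q : E[X]).natDegree (X : E[X]).natDegree := Polynomial.natDegree_sub_le _ _
      _ ≤ q := by
          rw [Polynomial.natDegree_X_pow, Polynomial.natDegree_X]
          omega
    have hABeq : A = B := Finset.eq_of_subset_of_card_le hAB (hAcard ▸ hBcard)
    have hzB : z ∈ B := by rw [hB, Finset.mem_filter]; exact ⟨Finset.mem_univ _, hz⟩
    rw [← hABeq] at hzB
    obtain ⟨a, _, ha⟩ := Finset.mem_image.mp hzB
    exact ⟨a, ha⟩
  -- norms land in F
  have hnormq : ∀ z : E, z ≠ 0 → (z ^ s) ^ q = z ^ s := by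
    intro z hz
    have h1 : z ^ (q ^ m - 1) = 1 := by
      rw [← hE]; exact FiniteField.pow_card_sub_one_eq_one z hz
    have h2 : s * q = (q ^ m - 1) + s := by
      rw [← hs]
      have : q - 1 + 1 = q := by omega
      calc s * q = s * (q - 1 + 1) := by rw [this]
      _ = s * (q - 1) + s := by ring
    rw [← pow_mul, h2, pow_add, h1, one_mul]
  have hnormF : ∀ z : E, ∃ a : F, algebraMap F E a = g.eval z ^ s :=
    fun z => hrange _ (hnormq _ (hnoroot z))
  choose nγ hnγ using hnormF
  have hkE : algebraMap F E ((K : F)) = (K : E) := map_natCast _ K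
  have hk0 : (K : F) ≠ 0 := by
    intro h
    rw [← hkE, h, map_zero] at hKE
    exact hKE rfl
  -- the codeword
  set β := Equiv.ofBijective α hα with hβ
  have hβa : ∀ i, β i = α i := fun i => rfl
  set c' : E → F := fun x => if x ∈ T then nγ x * ((K : F))⁻¹ else if x = 0 then - nγ 0 else 0
    with hc'def
  set c : Fin (q ^ m) → F := fun i => c' (α i) with hcdef
  have hcc' : ∀ x : E, c (β.symm x) = c' x := by
    intro x
    show c' (α (β.symm x)) = c' x
    rw [← hβa, β.apply_symm_apply]
  have hval : ∀ x ∈ S, algebraMap F E (c' x) * (∏ y ∈ S.erase x, (x - y)) = g.eval x ^ s := by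
    intro x hx
    rcases Finset.mem_insert.mp hx with h0 | hT'
    · subst h0
      simp only [hc'def, if_neg h0T, if_pos rfl, if_true]
      rw [map_neg, hnγ, hd0]
      ring
    · simp only [hc'def, if_pos hT']
      rw [map_mul, map_inv₀, hnγ, hkE, hd x hT', mul_assoc, inv_mul_cancel₀ hKE, mul_one]
  have hc'S : ∀ x ∈ S, c' x ≠ 0 := by
    intro x hx h0
    have hv := hval x hx
    rw [h0, map_zero, zero_mul] at hv
    exact (pow_ne_zero s (hnoroot x)) hv.symm
  have hc'0 : ∀ x, x ∉ S → c' x = 0 := by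
    intro x hx
    have hx0 : x ≠ 0 := fun h => hx (h ▸ Finset.mem_insert_self 0 T)
    have hxT : x ∉ T := fun h => hx (Finset.mem_insert_of_mem h)
    simp only [hc'def, if_neg hxT, if_neg hx0]
  set hpoly : E[X] := ∑ x ∈ S, C (algebraMap F E (c' x)) * ∏ y ∈ S.erase x, (X - C y)
    with hhdef
  have hdeggs : (g ^ s).natDegree = K := by
    rw [Polynomial.natDegree_pow, hgdeg, Nat.mul_comm]
  have hkey : hpoly = g ^ s := by
    have hz : hpoly - g ^ s = 0 := by
      apply Polynomial.eq_zero_of_natDegree_lt_card_of_eval_eq_zero' _ S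
      · intro x hx
        rw [Polynomial.eval_sub, hhdef, eval_node S _ hx, hval x hx, Polynomial.eval_pow,
          sub_self]
      · have h1 : (hpoly - g ^ s).natDegree ≤ K := by
          refine (Polynomial.natDegree_sub_le _ _).trans ?_
          refine max_le ?_ (le_of_eq hdeggs)
          rw [hhdef]
          exact (natDeg_node S _).trans (by rw [hScard]; omega)
        rw [hScard]; omega
    exact sub_eq_zero.mp hz
  have hsupp : ∀ i, α i ∉ S → c i = 0 := fun i hi => hc'0 _ hi
  have hsum := goppa_sum_eq α hα c S hsupp
  have hinner : ∑ x ∈ S, C (algebraMap F E (c ((Equiv.ofBijective α hα).symm x))) *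
      ∏ y ∈ S.erase x, (X - C y) = hpoly := by
    rw [hhdef]
    refine Finset.sum_congr rfl ?_
    intro x _
    rw [show c ((Equiv.ofBijective α hα).symm x) = c' x from hcc' x]
  have hmem : c ∈ goppaCode F α (g ^ s) := by
    show (g ^ s) ∣ ∑ i : Fin (q ^ m), C (algebraMap F E (c i)) *
      ∏ j ∈ Finset.univ.erase i, (X - C (α j))
    rw [hsum, hinner, hkey]
    exact dvd_mul_left _ _
  have hwt : hammingNorm c = K + 1 := by
    have h1 : hammingNorm c
        = (Finset.univ.filter (fun x : E => c ((Equiv.ofBijective α hα).symm x) ≠ 0)).card :=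
      hammingNorm_eq_card α hα c
    have h2 : (Finset.univ.filter (fun x : E => c ((Equiv.ofBijective α hα).symm x) ≠ 0)) = S := by
      ext x
      simp only [Finset.mem_filter, Finset.mem_univ, true_and]
      rw [show c ((Equiv.ofBijective α hα).symm x) = c' x from hcc' x]
      constructor
      · intro hx
        by_contra hxS
        exact hx (hc'0 x hxS)
      · intro hx
        exact hc'S x hx
    rw [h1, h2, hScard]
  have hcne : c ≠ 0 := by
    intro h0
    have h1 : c (β.symm 0) = 0 := congrFun h0 _
    rw [hcc'] at h1
    exact hc'S 0 (Finset.mem_insert_self 0 T) h1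
  constructor
  · exact ⟨c, hmem, hcne, by rw [hwt, hKdef]⟩
  -- lower bound
  · intro cc hmemcc hccne
    set Sup := Finset.univ.filter (fun x : E => cc ((Equiv.ofBijective α hα).symm x) ≠ 0)
      with hSupdef
    have hsupp2 : ∀ i, α i ∉ Sup → cc i = 0 := by
      intro i hi
      by_contra hne
      apply hi
      rw [hSupdef, Finset.mem_filter]
      refine ⟨Finset.mem_univ _, ?_⟩
      rw [show (Equiv.ofBijective α hα).symm (α i) = i from β.symm_apply_apply i]
      exact hne
    have hsum2 := goppa_sum_eq α hα cc Sup hsupp2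
    set h2 : E[X] := ∑ x ∈ Sup, C (algebraMap F E (cc ((Equiv.ofBijective α hα).symm x))) *
      ∏ y ∈ Sup.erase x, (X - C y) with hh2def
    have hdvd0 : (g ^ s) ∣ ∑ i : Fin (q ^ m), C (algebraMap F E (cc i)) *
        ∏ j ∈ Finset.univ.erase i, (X - C (α j)) := hmemcc
    rw [hsum2] at hdvd0
    have hcop : IsCoprime (g ^ s) (∏ y ∈ Finset.univ \ Sup, ((X : E[X]) - C y)) := by
      refine IsCoprime.pow_left ?_
      refine IsCoprime.prod_right ?_
      intro y _
      have hirr : Irreducible ((X : E[X]) - C y) := Polynomial.irreducible_X_sub_C y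
      refine (hirr.coprime_iff_not_dvd.mpr ?_).symm
      intro hdvd
      exact hnoroot y ((Polynomial.dvd_iff_isRoot).mp hdvd)
    have hdvdh : (g ^ s) ∣ h2 := hcop.dvd_of_dvd_mul_left hdvd0
    obtain ⟨i₀, hi₀⟩ : ∃ i, cc i ≠ 0 := Function.ne_iff.mp hccne
    have hx₀ : α i₀ ∈ Sup := by
      rw [hSupdef, Finset.mem_filter]
      refine ⟨Finset.mem_univ _, ?_⟩
      rw [show (Equiv.ofBijective α hα).symm (α i₀) = i₀ from β.symm_apply_apply i₀]
      exact hi₀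
    have hne2 : h2 ≠ 0 := by
      intro h0
      have heval := eval_node Sup
        (fun x => algebraMap F E (cc ((Equiv.ofBijective α hα).symm x))) hx₀
      rw [← hh2def, h0, Polynomial.eval_zero] at heval
      have hne3 : algebraMap F E (cc ((Equiv.ofBijective α hα).symm (α i₀))) ≠ 0 := by
        rw [show (Equiv.ofBijective α hα).symm (α i₀) = i₀ from β.symm_apply_apply i₀]
        intro hcz
        exact hi₀ (hφinj (by rw [hcz, map_zero]))
      have hne4 : (∏ y ∈ Sup.erase (α i₀), (α i₀ - y)) ≠ 0 := by
        refine Finset.prod_ne_zero_iff.mpr ?_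
        intro y hy
        exact sub_ne_zero.mpr (Ne.symm (Finset.mem_erase.mp hy).1)
      exact (mul_ne_zero hne3 hne4) heval.symm
    have hKle : K ≤ h2.natDegree := by
      rw [← hdeggs]
      exact Polynomial.natDegree_le_of_dvd hdvdh hne2
    have hKle2 : h2.natDegree ≤ Sup.card - 1 := by
      rw [hh2def]
      exact natDeg_node Sup _
    have hSup1 : 0 < Sup.card := Finset.card_pos.mpr ⟨α i₀, hx₀⟩
    have hwt2 : hammingNorm cc = Sup.card := hammingNorm_eq_card α hα cc
    omega
end

section
/- Let q be a prime power and m a positive integer. Let r be an integer with 1 ≤ r < q − 1 and r dividing q − 1, and set t = r·(q^m − 1)/(q − 1). Take the support set L = E^* (all nonzero elements of E) and the Goppa polynomial G(X) = X^t. Then the Goppa code Γ_q(L, G) has minimum distance exactly d = t + 1. -/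
open Polynomial
open Finset

lemma geom_nat (q : ℕ) (hq : 1 ≤ q) : ∀ m : ℕ, (q - 1) * ∑ i ∈ Finset.range m, q ^ i = q ^ m - 1 := by
  intro m
  induction m with
  | zero => simp
  | succ k ih =>
    rw [Finset.sum_range_succ, Nat.mul_add, ih, pow_succ]
    have h1 : 1 ≤ q ^ k := Nat.one_le_pow _ _ (by omega)
    have h2 : (q - 1) * q ^ k = q ^ k * q - q ^ k := by
      rw [Nat.sub_mul, one_mul, mul_comm]
    rw [h2]
    have h3 : q ^ k ≤ q ^ k * q := Nat.le_mul_of_pos_right _ (by omega)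
    omega


-- helper: monic divisor of equal degree is equal
lemma monic_dvd_eq {E : Type} [Field E] {p q : E[X]} (hp : p.Monic) (hq : q.Monic)
    (hdvd : p ∣ q) (hdeg : q.natDegree ≤ p.natDegree) : p = q := by
  obtain ⟨k, hk⟩ := hdvd
  have hk0 : k ≠ 0 := by
    rintro rfl
    rw [mul_zero] at hk
    exact hq.ne_zero hk
  have hdegs : q.natDegree = p.natDegree + k.natDegree := by
    rw [hk, Polynomial.natDegree_mul hp.ne_zero hk0]
  have hkdeg : k.natDegree = 0 := by omega
  have hklead : k.leadingCoeff = 1 := by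
    have := hq.leadingCoeff
    rw [hk, Polynomial.leadingCoeff_mul, hp.leadingCoeff, one_mul] at this
    exact this
  have : k = 1 := by
    rw [Polynomial.eq_C_of_natDegree_eq_zero hkdeg]
    rw [Polynomial.eq_C_of_natDegree_eq_zero hkdeg] at hklead
    rw [Polynomial.leadingCoeff_C] at hklead
    rw [hklead, Polynomial.C_1]
  rw [hk, this, mul_one]

lemma exists_good_finset {F E : Type} [Field F] [Fintype F] [Field E] [Fintype E] [Algebra F E]
    [DecidableEq E] (r n₀ t : ℕ)
    (hrle : r + 2 ≤ Fintype.card F)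
    (hn₀ : (Fintype.card F - 1) * n₀ = Fintype.card E - 1)
    (hn₀pos : 0 < n₀)
    (ht : t = r * n₀) :
    ∃ S : Finset E, S.card = t + 1 ∧ (∀ x ∈ S, x ≠ 0) ∧
      ∀ x ∈ S, ∃ a : F, a ≠ 0 ∧
        algebraMap F E a * ∏ y ∈ S.erase x, (x - y) = x ^ t := by
  classical
  set q := Fintype.card F with hq
  set Q := Fintype.card E with hQ
  have hq2 : 2 ≤ q := Fintype.one_lt_card
  have hQ2 : 2 ≤ Q := Fintype.one_lt_card
  set φ := algebraMap F E with hφ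
  have hφinj : Function.Injective φ := RingHom.injective φ
  set FS : Finset E := (Finset.univ.image φ).erase 0 with hFS
  have hFScard : FS.card = q - 1 := by
    rw [hFS, Finset.card_erase_of_mem, Finset.card_image_of_injective _ hφinj]
    · rfl
    · exact Finset.mem_image.mpr ⟨0, Finset.mem_univ _, map_zero φ⟩
  have hFSmem : ∀ u ∈ FS, ∃ a : F, a ≠ 0 ∧ φ a = u := by
    intro u hu
    obtain ⟨hne, hmem⟩ := Finset.mem_erase.mp hu
    obtain ⟨a, _, ha⟩ := Finset.mem_image.mp hmem
    refine ⟨a, fun h => hne ?_, ha⟩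
    rw [← ha, h, map_zero]
  have hFSmem' : ∀ a : F, a ≠ 0 → φ a ∈ FS := by
    intro a ha
    exact Finset.mem_erase.mpr ⟨fun h => ha (hφinj (h.trans (map_zero φ).symm)),
      Finset.mem_image.mpr ⟨a, Finset.mem_univ _, rfl⟩⟩
  have hFSpow : ∀ u ∈ FS, u ^ (q - 1) = 1 := by
    intro u hu
    obtain ⟨a, ha, rfl⟩ := hFSmem u hu
    rw [← map_pow, FiniteField.pow_card_sub_one_eq_one a ha, map_one]
  have hmonicA : ((X : E[X]) ^ (q - 1) - 1).Monic := by
    have := Polynomial.monic_X_pow_sub_C (1 : E) (n := q - 1) (by omega)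
    simpa using this
  have hneA : ((X : E[X]) ^ (q - 1) - 1) ≠ 0 := hmonicA.ne_zero
  have hprodA : ∏ u ∈ FS, (X - C u) = (X : E[X]) ^ (q - 1) - 1 := by
    refine monic_dvd_eq (Polynomial.monic_prod_of_monic _ _ fun u _ =>
      Polynomial.monic_X_sub_C u) hmonicA ?_ ?_
    · have hsub : FS.val ≤ ((X : E[X]) ^ (q - 1) - 1).roots := by
        rw [Multiset.le_iff_subset FS.nodup]
        intro u hu
        rw [Polynomial.mem_roots hneA]
        simp only [Polynomial.IsRoot.def, Polynomial.eval_sub, Polynomial.eval_pow,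
          Polynomial.eval_X, Polynomial.eval_one]
        rw [hFSpow u hu, sub_self]
      have := (Multiset.prod_X_sub_C_dvd_iff_le_roots hneA FS.val).mpr hsub
      rwa [Finset.prod_eq_multiset_prod]
    · have h1 : ((X : E[X]) ^ (q - 1) - 1).natDegree = q - 1 := by
        have := Polynomial.natDegree_X_pow_sub_C (n := q - 1) (r := (1 : E))
        simpa using this
      have h2 : (∏ u ∈ FS, ((X : E[X]) - C u)).natDegree = q - 1 := by
        rw [Polynomial.natDegree_prod_of_monic _ _ fun u _ => Polynomial.monic_X_sub_C u]
        simp [hFScard]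
      omega
  have hroot_mem : ∀ v : E, v ^ (q - 1) = 1 → ∃ a : F, a ≠ 0 ∧ φ a = v := by
    intro v hv
    have hev : Polynomial.eval v (∏ u ∈ FS, ((X : E[X]) - C u)) = 0 := by
      rw [hprodA]
      simp [hv]
    rw [Polynomial.eval_prod] at hev
    obtain ⟨u, hu, h⟩ := Finset.prod_eq_zero_iff.mp hev
    simp only [Polynomial.eval_sub, Polynomial.eval_X, Polynomial.eval_C, sub_eq_zero] at h
    obtain ⟨a, ha, hau⟩ := hFSmem u hu
    exact ⟨a, ha, by rw [hau, h]⟩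
  -- choose Y
  obtain ⟨Yf, hYfsub, hYfcard⟩ := Finset.exists_subset_card_eq (s := Finset.univ.erase (0 : F)) (n := r)
    (by rw [Finset.card_erase_of_mem (Finset.mem_univ _), Finset.card_univ]; omega)
  have hYfne : ∀ a ∈ Yf, a ≠ 0 := fun a ha => (Finset.mem_erase.mp (hYfsub ha)).1
  set Y : Finset E := Yf.image φ with hY
  have hYcard : Y.card = r := by rw [hY, Finset.card_image_of_injective _ hφinj, hYfcard]
  have hYsub : Y ⊆ FS := by
    intro y hy
    obtain ⟨a, ha, rfl⟩ := Finset.mem_image.mp hy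
    exact hFSmem' a (hYfne a ha)
  have hY0 : (0 : E) ∉ Y := fun h => by
    obtain ⟨a, ha, ha0⟩ := Finset.mem_image.mp h
    exact hYfne a ha (hφinj (ha0.trans (map_zero φ).symm))
  -- the polynomial P
  set P : E[X] := X * ∏ y ∈ Y, (X ^ n₀ - C y) with hP
  have hprodmonic : (∏ y ∈ Y, ((X : E[X]) ^ n₀ - C y)).Monic :=
    Polynomial.monic_prod_of_monic _ _ fun y _ => Polynomial.monic_X_pow_sub_C y (by omega)
  have hPmonic : P.Monic := Polynomial.monic_X.mul hprodmonic
  have hPne : P ≠ 0 := hPmonic.ne_zero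
  have hPdeg : P.natDegree = t + 1 := by
    rw [hP, Polynomial.natDegree_mul Polynomial.X_ne_zero hprodmonic.ne_zero,
      Polynomial.natDegree_X,
      Polynomial.natDegree_prod_of_monic _ _ fun y _ => Polynomial.monic_X_pow_sub_C y (by omega)]
    simp only [Polynomial.natDegree_X_pow_sub_C, Finset.sum_const, smul_eq_mul, hYcard]
    omega
  -- X^Q - X factorization
  have hM : ((X : E[X]) ^ Q - X) = X * ∏ u ∈ FS, (X ^ n₀ - C u) := by
    have h1 : (((X : E[X]) ^ (q - 1) - 1)).comp (X ^ n₀) = X ^ ((q - 1) * n₀) - 1 := by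
      rw [Polynomial.sub_comp, Polynomial.pow_comp, Polynomial.X_comp, Polynomial.one_comp,
        ← pow_mul, mul_comm n₀ (q - 1)]
    have hQ1 : Q - 1 + 1 = Q := by omega
    have h2 : ((X : E[X]) ^ Q - X) = X * ((X : E[X]) ^ (Q - 1) - 1) := by
      rw [mul_sub, mul_one, ← pow_succ', hQ1]
    rw [h2, ← hn₀, ← h1, ← hprodA, Polynomial.prod_comp]
    congr 1
    refine Finset.prod_congr rfl fun u _ => ?_
    rw [Polynomial.sub_comp, Polynomial.X_comp, Polynomial.C_comp]
  have hPdvd : P ∣ (X : E[X]) ^ Q - X := by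
    rw [hM, hP]
    exact mul_dvd_mul_left _ (Finset.prod_dvd_prod_of_subset _ _ _ hYsub)
  have hMne : ((X : E[X]) ^ Q - X) ≠ 0 := FiniteField.X_pow_card_sub_X_ne_zero E (by omega)
  have hMroots : ((X : E[X]) ^ Q - X).roots = Finset.univ.val :=
    FiniteField.roots_X_pow_card_sub_X E
  have hMsplits : Polynomial.Splits ((X : E[X]) ^ Q - X) := by
    rw [Polynomial.splits_iff_card_roots, hMroots,
      FiniteField.X_pow_card_sub_X_natDegree_eq E (by omega)]
    exact (Finset.card_univ (α := E)).trans hQ.symm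
  have hProotsle : P.roots ≤ ((X : E[X]) ^ Q - X).roots := Polynomial.roots.le_of_dvd hMne hPdvd
  have hPnodup : P.roots.Nodup := by
    refine Multiset.nodup_of_le hProotsle ?_
    rw [hMroots]
    exact Finset.univ.nodup
  have hPsplits : Polynomial.Splits P :=
    Polynomial.Splits.of_dvd hMsplits hMne hPdvd
  have hProotscard : Multiset.card P.roots = t + 1 := by
    rw [Polynomial.splits_iff_card_roots.mp hPsplits, hPdeg]
  set S₀ : Finset E := P.roots.toFinset with hS₀
  have hS₀val : S₀.val = P.roots := Multiset.dedup_eq_self.mpr hPnodup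
  have hS₀card : S₀.card = t + 1 := by
    rw [Finset.card_def, hS₀val, hProotscard]
  have hPeq : P = ∏ z ∈ S₀, (X - C z) := by
    conv_lhs => rw [← Polynomial.prod_multiset_X_sub_C_of_monic_of_roots_card_eq hPmonic
      (by rw [hProotscard, hPdeg])]
    rw [Finset.prod_eq_multiset_prod, hS₀val]
  have hmemS₀ : ∀ z : E, z ∈ S₀ ↔ (z = 0 ∨ ∃ y ∈ Y, z ^ n₀ = y) := by
    intro z
    rw [hS₀, Multiset.mem_toFinset, Polynomial.mem_roots hPne]
    simp only [Polynomial.IsRoot.def, hP, Polynomial.eval_mul, Polynomial.eval_X,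
      Polynomial.eval_prod, Polynomial.eval_sub, Polynomial.eval_pow, Polynomial.eval_C]
    rw [mul_eq_zero, Finset.prod_eq_zero_iff]
    constructor
    · rintro (h | ⟨y, hy, h⟩)
      · exact Or.inl h
      · exact Or.inr ⟨y, hy, by linear_combination h⟩
    · rintro (h | ⟨y, hy, h⟩)
      · exact Or.inl h
      · exact Or.inr ⟨y, hy, by rw [h, sub_self]⟩
  -- derivative values are in the image of F
  have hD : ∀ z ∈ S₀, ∃ a : F, a ≠ 0 ∧ φ a = ∏ w ∈ S₀.erase z, (z - w) := by
    intro z hz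
    have hnodal : P = Lagrange.nodal S₀ id := by
      rw [hPeq, Lagrange.nodal]
      rfl
    have heval : ∏ w ∈ S₀.erase z, (z - w) = Polynomial.eval z (Polynomial.derivative P) := by
      have h1 := Lagrange.eval_nodal_derivative_eval_node_eq (s := S₀) (v := id) (i := z) hz
      simp only [id] at h1
      rw [hnodal, h1, Lagrange.eval_nodal]
      simp
    have hvalue : ∃ a : F, φ a = Polynomial.eval z (Polynomial.derivative P) := by
      rcases (hmemS₀ z).mp hz with hz0 | ⟨y₀, hy₀Y, hzy₀⟩
      · refine ⟨∏ b ∈ Yf, (0 - b), ?_⟩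
        rw [hP, Polynomial.derivative_mul, Polynomial.derivative_X, one_mul,
          Polynomial.eval_add, Polynomial.eval_mul, Polynomial.eval_X, hz0, zero_mul, add_zero,
          Polynomial.eval_prod]
        rw [map_prod, hY, Finset.prod_image (fun a _ b _ h => hφinj h)]
        refine Finset.prod_congr rfl fun b _ => ?_
        simp only [Polynomial.eval_sub, Polynomial.eval_pow, Polynomial.eval_X,
          Polynomial.eval_C, map_sub, map_zero]
        rw [zero_pow (by omega : n₀ ≠ 0)]
      · obtain ⟨a₀, ha₀Yf, ha₀⟩ := Finset.mem_image.mp hy₀Y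
        have himg : ∏ y' ∈ Y.erase y₀, (y₀ - y') = φ (∏ b ∈ Yf.erase a₀, (a₀ - b)) := by
          rw [hY, ← ha₀, ← Finset.image_erase hφinj,
            Finset.prod_image (fun a _ b _ h => hφinj h), map_prod]
          exact Finset.prod_congr rfl fun b _ => (map_sub φ _ _).symm
        refine ⟨(n₀ : F) * a₀ * ∏ b ∈ Yf.erase a₀, (a₀ - b), ?_⟩
        have hgsplit : ∏ y ∈ Y, ((X : E[X]) ^ n₀ - C y) =
            ((X : E[X]) ^ n₀ - C y₀) * ∏ y ∈ Y.erase y₀, ((X : E[X]) ^ n₀ - C y) :=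
          (Finset.mul_prod_erase Y _ hy₀Y).symm
        rw [hP, hgsplit, ← mul_assoc, Polynomial.derivative_mul (f := X * _),
          Polynomial.derivative_mul (f := (X : E[X])), Polynomial.derivative_X, one_mul,
          Polynomial.derivative_sub, Polynomial.derivative_C, sub_zero,
          Polynomial.derivative_X_pow]
        simp only [Polynomial.eval_add, Polynomial.eval_mul, Polynomial.eval_sub,
          Polynomial.eval_pow, Polynomial.eval_X, Polynomial.eval_C, Polynomial.eval_prod,
          hzy₀, sub_self, mul_zero, zero_mul, add_zero, zero_add]
        have hzn : z * ((n₀ : E) * z ^ (n₀ - 1)) = (n₀ : E) * y₀ := by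
          rw [← mul_assoc, mul_comm z ((n₀ : E)), mul_assoc, ← hzy₀]
          congr 1
          rw [← pow_succ']
          congr 1
          omega
        rw [hzn, map_mul, map_mul, map_natCast, ha₀, himg]
    obtain ⟨a, ha⟩ := hvalue
    refine ⟨a, ?_, by rw [ha, heval]⟩
    intro ha0
    rw [ha0, map_zero] at ha
    have : ∏ w ∈ S₀.erase z, (z - w) ≠ 0 := by
      rw [Finset.prod_ne_zero_iff]
      intro w hw
      exact sub_ne_zero_of_ne fun he => (Finset.mem_erase.mp hw).1 (by rw [he])
    rw [heval] at this
    exact this ha.symm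
  -- choose the shift
  have htQ : t + 1 < Q := by
    have h1 : r * n₀ ≤ (q - 2) * n₀ := Nat.mul_le_mul_right _ (by omega)
    have h2 : (q - 2) * n₀ + n₀ = (q - 1) * n₀ := by
      have : q - 2 + 1 = q - 1 := by omega
      rw [← this, Nat.succ_mul]
    omega
  have hexu : ∃ u : E, u ∉ S₀ := by
    by_contra h
    push_neg at h
    have : S₀ = Finset.univ := Finset.eq_univ_iff_forall.mpr h
    rw [this, Finset.card_univ] at hS₀card
    omega
  obtain ⟨u, hu⟩ := hexu
  set S : Finset E := S₀.image (fun z => z - u) with hSdef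
  have hinj_sub : Function.Injective (fun z : E => z - u) := fun a b h => by
    simpa using congrArg (· + u) h
  have hScard : S.card = t + 1 := by
    rw [hSdef, Finset.card_image_of_injective _ hinj_sub, hS₀card]
  have hSne : ∀ x ∈ S, x ≠ 0 := by
    intro x hx
    obtain ⟨z, hzS₀, rfl⟩ := Finset.mem_image.mp hx
    intro h
    rw [sub_eq_zero] at h
    exact hu (h ▸ hzS₀)
  refine ⟨S, hScard, hSne, ?_⟩
  intro x hx
  obtain ⟨z, hzS₀, rfl⟩ := Finset.mem_image.mp hx
  obtain ⟨a', ha'ne, ha'⟩ := hD z hzS₀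
  -- x^t is in the image of F
  have hxne : (z - u) ≠ 0 := hSne _ hx
  have hxt : ((z - u) ^ t) ^ (q - 1) = 1 := by
    have h1 : (z - u) ^ (Q - 1) = 1 := FiniteField.pow_card_sub_one_eq_one _ hxne
    have h2 : t * (q - 1) = (Q - 1) * r := by
      rw [ht, ← hn₀]
      ring
    rw [← pow_mul, h2, pow_mul, h1, one_pow]
  obtain ⟨b, hbne, hb⟩ := hroot_mem ((z - u) ^ t) hxt
  -- the product over S.erase x equals the one over S₀.erase z
  have hprodS : ∏ y ∈ S.erase (z - u), ((z - u) - y) = ∏ w ∈ S₀.erase z, (z - w) := by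
    rw [hSdef, ← Finset.image_erase hinj_sub, Finset.prod_image
      (fun a _ b _ h => hinj_sub h)]
    refine Finset.prod_congr rfl fun w _ => ?_
    ring
  refine ⟨b * a'⁻¹, mul_ne_zero hbne (inv_ne_zero ha'ne), ?_⟩
  rw [map_mul, map_inv₀, hprodS, ha', hb]
  have hne : φ a' ≠ 0 := by
    rw [ha']
    rw [Finset.prod_ne_zero_iff]
    intro w hw
    exact sub_ne_zero_of_ne fun he => (Finset.mem_erase.mp hw).1 (by rw [he])
  rw [ha'] at hne
  field_simp


-- decomposition lemma
lemma goppa_sum_eq_s15 {F E : Type} [Field F] [Field E] [Algebra F E] {n : ℕ} (α : Fin n → E)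
    (c : Fin n → F) (I : Finset (Fin n)) (hI : ∀ i, i ∉ I → c i = 0) :
    ∑ i : Fin n, Polynomial.C (algebraMap F E (c i)) *
        ∏ j ∈ Finset.univ.erase i, (Polynomial.X - Polynomial.C (α j)) =
      (∏ j ∈ Finset.univ \ I, (Polynomial.X - Polynomial.C (α j))) *
        ∑ i ∈ I, Polynomial.C (algebraMap F E (c i)) *
          ∏ j ∈ I.erase i, (Polynomial.X - Polynomial.C (α j)) := by
  rw [Finset.mul_sum]
  rw [← Finset.sum_subset (Finset.subset_univ I) (by
    intro i _ hiI
    rw [hI i hiI]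
    simp)]
  refine Finset.sum_congr rfl fun i hi => ?_
  have hsplit : Finset.univ.erase i = (Finset.univ \ I) ∪ I.erase i := by
    ext j
    simp only [Finset.mem_erase, Finset.mem_univ, and_true, Finset.mem_union, Finset.mem_sdiff,
      true_and]
    constructor
    · intro hj
      by_cases hjI : j ∈ I
      · exact Or.inr ⟨hj, hjI⟩
      · exact Or.inl hjI
    · rintro (hj | ⟨hj, _⟩)
      · rintro rfl; exact hj hi
      · exact hj
  have hdisj : Disjoint (Finset.univ \ I) (I.erase i) := by
    refine Finset.disjoint_left.mpr fun j hj hj' => ?_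
    exact (Finset.mem_sdiff.mp hj).2 (Finset.mem_of_mem_erase hj')
  rw [hsplit, Finset.prod_union hdisj]
  ring

lemma goppa_lower {F E : Type} [Field F] [DecidableEq F] [Field E] [Algebra F E] {n t : ℕ} (α : Fin n → E)
    (hα : Function.Injective α) (h0 : ∀ i, α i ≠ 0) (c : Fin n → F)
    (hc : (Polynomial.X ^ t : Polynomial E) ∣ ∑ i : Fin n, Polynomial.C (algebraMap F E (c i)) *
        ∏ j ∈ Finset.univ.erase i, (Polynomial.X - Polynomial.C (α j)))
    (i₀ : Fin n) (hi₀ : c i₀ ≠ 0) :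
    t + 1 ≤ hammingNorm c := by
  classical
  set I : Finset (Fin n) := {i | c i ≠ 0} with hIdef
  have hmemI : ∀ i : Fin n, i ∈ I ↔ c i ≠ 0 := by
    intro i; simp [hIdef]
  have hnorm : hammingNorm c = I.card := rfl
  by_contra hlt
  push_neg at hlt
  have hcard : I.card ≤ t := by omega
  rw [goppa_sum_eq_s15 α c I (fun i hi => by simpa [hmemI] using hi)] at hc
  set M : Polynomial E := ∑ i ∈ I, Polynomial.C (algebraMap F E (c i)) *
      ∏ j ∈ I.erase i, (Polynomial.X - Polynomial.C (α j)) with hMdef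
  have hi₀I : i₀ ∈ I := (hmemI i₀).mpr hi₀
  -- X does not divide the left product
  have hXnd : ¬ (Polynomial.X : Polynomial E) ∣
      ∏ j ∈ Finset.univ \ I, (Polynomial.X - Polynomial.C (α j)) := by
    rw [Polynomial.X_dvd_iff]
    rw [Polynomial.coeff_zero_eq_eval_zero, Polynomial.eval_prod]
    intro h
    obtain ⟨j, _, hj⟩ := Finset.prod_eq_zero_iff.mp h
    simp only [Polynomial.eval_sub, Polynomial.eval_X, Polynomial.eval_C, zero_sub,
      neg_eq_zero] at hj
    exact h0 j hj
  have hXM : (Polynomial.X ^ t : Polynomial E) ∣ M :=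
    Polynomial.prime_X.pow_dvd_of_dvd_mul_left _ hXnd hc
  -- M is nonzero: evaluate at α i₀
  have hevalM : M.eval (α i₀) = (algebraMap F E (c i₀)) *
      ∏ j ∈ I.erase i₀, (α i₀ - α j) := by
    rw [hMdef, Polynomial.eval_finset_sum]
    rw [Finset.sum_eq_single i₀]
    · simp [Polynomial.eval_prod]
    · intro i hiI hne
      have : α i₀ - α i₀ = 0 := sub_self _
      rw [Polynomial.eval_mul, Polynomial.eval_prod]
      rw [Finset.prod_eq_zero (Finset.mem_erase.mpr ⟨hne.symm, hi₀I⟩)]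
      · ring
      · simp
    · intro h; exact absurd hi₀I h
  have hMne : M ≠ 0 := by
    intro h
    rw [h] at hevalM
    simp only [Polynomial.eval_zero] at hevalM
    have h1 : algebraMap F E (c i₀) ≠ 0 := by
      simpa using (map_ne_zero_iff _ (algebraMap F E).injective).mpr hi₀
    have h2 : ∏ j ∈ I.erase i₀, (α i₀ - α j) ≠ 0 := by
      rw [Finset.prod_ne_zero_iff]
      intro j hj
      have : j ≠ i₀ := (Finset.mem_erase.mp hj).1
      exact sub_ne_zero_of_ne fun he => this (hα he.symm)
    exact (mul_ne_zero h1 h2) hevalM.symm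
  -- degree contradiction
  have hdegM : M.degree < t := by
    refine lt_of_le_of_lt (Polynomial.degree_sum_le _ _) ?_
    rw [Finset.sup_lt_iff (by exact_mod_cast WithBot.bot_lt_coe t)]
    intro i hiI
    refine lt_of_le_of_lt (Polynomial.degree_mul_le _ _) ?_
    have h1 : (Polynomial.C (algebraMap F E (c i))).degree ≤ 0 := Polynomial.degree_C_le
    have h2 : (∏ j ∈ I.erase i, (Polynomial.X - Polynomial.C (α j))).degree
        = ((I.card - 1 : ℕ) : WithBot ℕ) := by
      have hh := Lagrange.degree_nodal (s := I.erase i) (v := α)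
      rw [Lagrange.nodal] at hh
      rw [hh, Finset.card_erase_of_mem hiI]
    calc (Polynomial.C (algebraMap F E (c i))).degree +
          (∏ j ∈ I.erase i, (Polynomial.X - Polynomial.C (α j))).degree
        ≤ 0 + ((I.card - 1 : ℕ) : WithBot ℕ) := by
          exact add_le_add h1 (le_of_eq h2)
      _ = ((I.card - 1 : ℕ) : WithBot ℕ) := by rw [zero_add]
      _ < (t : WithBot ℕ) := by
          have h3 : I.card - 1 < t := by
            have : 1 ≤ I.card := Finset.card_pos.mpr ⟨i₀, hi₀I⟩
            omega
          exact_mod_cast h3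
  have := Polynomial.degree_le_of_dvd hXM hMne
  rw [Polynomial.degree_X_pow] at this
  exact absurd (lt_of_le_of_lt this hdegM) (lt_irrefl _)


/-- Proposition: monomial Goppa codes with `t = r(q^m-1)/(q-1)`.
Let `1 ≤ r < q - 1` with `r ∣ q - 1` and `t = r(q^m - 1)/(q - 1)`. With support set
`L = E^*` and Goppa polynomial `G(X) = X^t`, the Goppa code `Γ_q(L, G)` has minimum
distance exactly `t + 1`. -/
theorem monomial_goppa_minDist
    (q m r t : ℕ) (hq : IsPrimePow q) (hm : 0 < m)
    (hr1 : 1 ≤ r) (hr2 : r < q - 1) (hrdvd : r ∣ q - 1)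
    (ht : t * (q - 1) = r * (q ^ m - 1))
    (F E : Type) [Field F] [Fintype F] [DecidableEq F] [Field E] [Fintype E] [Algebra F E]
    (hF : Fintype.card F = q) (hE : Fintype.card E = q ^ m)
    (α : Fin (q ^ m - 1) → E) (hα : Function.Injective α)
    (hrange : Set.range α = {x : E | x ≠ 0}) :
    hasMinDist (goppaCode F α (X ^ t : Polynomial E)) (t + 1) := by
  classical
  have hq3 : 3 ≤ q := by omega
  set n₀ : ℕ := ∑ i ∈ Finset.range m, q ^ i with hn₀def
  have hgeom : (q - 1) * n₀ = q ^ m - 1 := geom_nat q (by omega) m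
  have hn₀pos : 0 < n₀ := by
    rw [hn₀def]
    have : (0:ℕ) ∈ Finset.range m := Finset.mem_range.mpr hm
    calc 0 < q ^ 0 := by norm_num
    _ ≤ ∑ i ∈ Finset.range m, q ^ i := Finset.single_le_sum (fun i _ => Nat.zero_le _) this
  have htr : t = r * n₀ := by
    have h1 : t * (q - 1) = (r * n₀) * (q - 1) := by
      rw [ht, ← hgeom]
      ring
    exact Nat.eq_of_mul_eq_mul_right (by omega) h1
  -- get the good support set
  obtain ⟨S, hScard, hSne, hSval⟩ := exists_good_finset (F := F) (E := E) r n₀ t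
    (by rw [hF]; omega) (by rw [hF, hE]; exact hgeom) hn₀pos htr
  set φ := algebraMap F E with hφ
  have hφinj : Function.Injective φ := RingHom.injective φ
  set I : Finset (Fin (q ^ m - 1)) := {i | α i ∈ S} with hIdef
  have hmemI : ∀ i, i ∈ I ↔ α i ∈ S := by intro i; simp [hIdef]
  have hIcard : I.card = t + 1 := by
    rw [← hScard]
    refine Finset.card_bij (fun i _ => α i) ?_ ?_ ?_
    · intro i hi
      exact (hmemI i).mp hi
    · intro i hi j hj hij
      exact hα hij
    · intro x hx
      have hxr : x ∈ Set.range α := by rw [hrange]; exact hSne x hx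
      obtain ⟨i, hi⟩ := hxr
      exact ⟨i, (hmemI i).mpr (hi ▸ hx), hi⟩
  -- identify the product over I.erase i with the product over S.erase (α i)
  have hprodIS : ∀ i ∈ I, ∏ j ∈ I.erase i, (α i - α j) = ∏ y ∈ S.erase (α i), (α i - y) := by
    intro i hi
    refine Finset.prod_bij (fun j _ => α j) ?_ ?_ ?_ ?_
    · intro j hj
      obtain ⟨hji, hjI⟩ := Finset.mem_erase.mp hj
      exact Finset.mem_erase.mpr ⟨fun h => hji (hα h), (hmemI j).mp hjI⟩
    · intro j₁ _ j₂ _ h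
      exact hα h
    · intro y hy
      obtain ⟨hyne, hyS⟩ := Finset.mem_erase.mp hy
      have hxr : y ∈ Set.range α := by rw [hrange]; exact hSne y hyS
      obtain ⟨j, hj⟩ := hxr
      refine ⟨j, Finset.mem_erase.mpr ⟨fun h => hyne ?_, (hmemI j).mpr (hj ▸ hyS)⟩, hj⟩
      rw [← hj, h]
    · intro j _
      rfl
  have hW : ∀ i ∈ I, ∏ j ∈ I.erase i, (α i - α j) ≠ 0 := by
    intro i hi
    rw [Finset.prod_ne_zero_iff]
    intro j hj
    exact sub_ne_zero_of_ne fun h => (Finset.mem_erase.mp hj).1 (hα h.symm)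
  have hval : ∀ i ∈ I, ∃ a : F, a ≠ 0 ∧
      φ a = (α i) ^ t * (∏ j ∈ I.erase i, (α i - α j))⁻¹ := by
    intro i hi
    obtain ⟨a, ha, haeq⟩ := hSval (α i) ((hmemI i).mp hi)
    refine ⟨a, ha, ?_⟩
    rw [← hprodIS i hi] at haeq
    field_simp [hW i hi] at haeq ⊢
    linear_combination haeq
  choose! a ha0 haeq using hval
  set c : Fin (q ^ m - 1) → F := fun i => if i ∈ I then a i else 0 with hcdef
  have hcI : ∀ i ∈ I, c i = a i := by intro i hi; simp [hcdef, hi]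
  have hcnI : ∀ i, i ∉ I → c i = 0 := by intro i hi; simp [hcdef, hi]
  have hcne : ∀ i, c i ≠ 0 ↔ i ∈ I := by
    intro i
    by_cases hi : i ∈ I
    · simp [hcdef, hi, ha0 i hi]
    · simp [hcdef, hi]
  -- membership: the inner sum is X^t
  have hinner : ∑ i ∈ I, Polynomial.C (φ (c i)) *
      ∏ j ∈ I.erase i, (Polynomial.X - Polynomial.C (α j)) = (X : Polynomial E) ^ t := by
    have hdeg : ((X : Polynomial E) ^ t).degree < I.card := by
      rw [Polynomial.degree_X_pow, hIcard]
      exact_mod_cast Nat.lt_succ_self t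
    have hinterp := Lagrange.eq_interpolate (s := I) (v := α) (hα.injOn) hdeg
    rw [Lagrange.interpolate_apply] at hinterp
    conv_rhs => rw [hinterp]
    refine Finset.sum_congr rfl fun i hi => ?_
    have hbasis : Lagrange.basis I α i =
        Polynomial.C ((∏ j ∈ I.erase i, (α i - α j))⁻¹) *
          ∏ j ∈ I.erase i, (Polynomial.X - Polynomial.C (α j)) := by
      simp only [Lagrange.basis, Lagrange.basisDivisor]
      rw [Finset.prod_mul_distrib, ← map_prod, Finset.prod_inv_distrib]
    rw [hbasis, Polynomial.eval_pow, Polynomial.eval_X, hcI i hi, haeq i hi]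
    rw [map_mul, ← mul_assoc, ← map_mul]
  -- membership in the Goppa code
  have hmem : c ∈ goppaCode F α ((X : Polynomial E) ^ t) := by
    show (X : Polynomial E) ^ t ∣ _
    rw [goppa_sum_eq_s15 α c I hcnI, hinner]
    exact dvd_mul_left _ _
  have hnorm : hammingNorm c = t + 1 := by
    have hfe : ({i | c i ≠ 0} : Finset (Fin (q ^ m - 1))) = I := by
      ext i
      simpa using hcne i
    rw [hammingNorm, hfe, hIcard]
  have hIne : I.Nonempty := Finset.card_pos.mp (by omega)
  obtain ⟨i₀, hi₀⟩ := hIne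
  have hc0 : c ≠ 0 := by
    intro h
    exact ((hcne i₀).mpr hi₀) (by rw [h]; rfl)
  have h0 : ∀ i, α i ≠ 0 := by
    intro i
    have : α i ∈ Set.range α := Set.mem_range_self i
    rw [hrange] at this
    exact this
  constructor
  · exact ⟨c, hmem, hc0, hnorm⟩
  · intro c' hc' hc'ne
    obtain ⟨j₀, hj₀⟩ := Function.ne_iff.mp hc'ne
    exact goppa_lower α hα h0 c' hc' j₀ hj₀
end
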